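/- (Identity of ĥ.) Let (a_1,…,a_n) be a cyclic generalized arithmetic sequence with n ≥ 2, and let m ∈ {1,…,n} be such that a_m > a_{m−1} and a_m > a_{m+1} (indices taken modulo n). Then ĥ(a_1,…,a_{m−1},a_{m+1},…,a_n) = ĥ(a_1,…,a_n), i.e. deleting the local maximum a_m does not change the value of ĥ. -/

import Mathlib

/-- `ĥ` of a cyclic sequence of length `n`, given as a function `a : ℤ → ℝ`
(periodic of period `n`, with meaningful values `a 1, …, a n`). -/
noncomputable def hhatCyc (n : ℕ) (a : ℤ → ℝ) : ℝ :=
  ∑ i ∈ Finset.Icc (1 : ℤ) (n : ℤ),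
    (((a i + a (i + 2)) / a (i + 1) + (a (i - 1) + a (i + 1)) / a i) / 2 - 3)

private lemma sum_Icc_shift (f : ℤ → ℝ) (lo hi c : ℤ) :
    ∑ i ∈ Finset.Icc (lo + c) (hi + c), f i = ∑ i ∈ Finset.Icc lo hi, f (i + c) := by
  rw [← Finset.map_add_right_Icc, Finset.sum_map]
  rfl

private lemma sum_Icc_top (f : ℤ → ℝ) (lo hi : ℤ) (h : lo ≤ hi) :
    ∑ i ∈ Finset.Icc lo hi, f i = (∑ i ∈ Finset.Icc lo (hi - 1), f i) + f hi := by
  have h1 : Finset.Icc lo hi = insert hi (Finset.Icc lo (hi - 1)) := by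
    ext x; simp only [Finset.mem_Icc, Finset.mem_insert]; omega
  rw [h1, Finset.sum_insert (by simp only [Finset.mem_Icc]; omega), add_comm]

private lemma sum_Icc_bot (f : ℤ → ℝ) (lo hi : ℤ) (h : lo ≤ hi) :
    ∑ i ∈ Finset.Icc lo hi, f i = f lo + ∑ i ∈ Finset.Icc (lo + 1) hi, f i := by
  have h1 : Finset.Icc lo hi = insert lo (Finset.Icc (lo + 1) hi) := by
    ext x; simp only [Finset.mem_Icc, Finset.mem_insert]; omega
  rw [h1, Finset.sum_insert (by simp only [Finset.mem_Icc]; omega)]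

private lemma sum_window_step (f : ℤ → ℝ) (p : ℤ) (hf : ∀ i, f (i + p) = f i) (k : ℤ) :
    ∑ i ∈ Finset.Icc (k + 1) (k + p), f i = ∑ i ∈ Finset.Icc k (k + p - 1), f i := by
  rcases le_or_gt 1 p with hp1 | hp1
  · rw [sum_Icc_top f (k + 1) (k + p) (by omega), sum_Icc_bot f k (k + p - 1) (by omega),
      hf k, add_comm]
  · rw [Finset.Icc_eq_empty (by omega), Finset.Icc_eq_empty (by omega)]

private lemma sum_window (f : ℤ → ℝ) (p : ℤ) (hf : ∀ i, f (i + p) = f i) (k : ℤ) :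
    ∑ i ∈ Finset.Icc (k + 1) (k + p), f i = ∑ i ∈ Finset.Icc 1 p, f i := by
  induction k using Int.induction_on with
  | zero => norm_num
  | succ k ih =>
    have h1 := sum_window_step f p hf ((k : ℤ) + 1)
    rw [show ((k:ℤ) + 1 + p - 1) = (k:ℤ) + p by ring] at h1
    rw [h1]; exact ih
  | pred k ih =>
    have h1 := sum_window_step f p hf (-(k:ℤ))
    rw [show (-(k:ℤ) - 1 + 1) = -(k:ℤ) by ring, show (-(k:ℤ) - 1 + p) = -(k:ℤ) + p - 1 by ring]
    rw [← h1]; exact ih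

private lemma hhat_eq_sum (p : ℕ) (a : ℤ → ℝ) (hper : ∀ i, a (i + (p : ℤ)) = a i) :
    hhatCyc p a = ∑ i ∈ Finset.Icc (1 : ℤ) (p : ℤ), ((a (i - 1) + a (i + 1)) / a i - 3) := by
  set F : ℤ → ℝ := fun i => (a (i - 1) + a (i + 1)) / a i with hF
  have hFper : ∀ i, F (i + (p : ℤ)) = F i := by
    intro i
    simp only [hF]
    rw [show i + (p : ℤ) - 1 = (i - 1) + (p : ℤ) by ring,
      show i + (p : ℤ) + 1 = (i + 1) + (p : ℤ) by ring, hper, hper, hper]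
  have h2 := sum_window F (p : ℤ) hFper 1
  have h3 := sum_Icc_shift F 1 (p : ℤ) 1
  rw [show ((p : ℤ) + 1) = 1 + (p : ℤ) by ring] at h3
  have hshift : ∑ i ∈ Finset.Icc (1 : ℤ) (p : ℤ), F (i + 1)
      = ∑ i ∈ Finset.Icc (1 : ℤ) (p : ℤ), F i := by rw [← h3, h2]
  have key : ∀ i : ℤ, ((a i + a (i + 2)) / a (i + 1) + (a (i - 1) + a (i + 1)) / a i) / 2 - 3
      = (F (i + 1) + F i) / 2 - 3 := by
    intro i
    simp only [hF]
    rw [show i + 1 - 1 = i by ring, show i + 1 + 1 = i + 2 by ring]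
  unfold hhatCyc
  simp only [key]
  rw [Finset.sum_sub_distrib, ← Finset.sum_div, Finset.sum_add_distrib, hshift,
    Finset.sum_sub_distrib]
  ring

/-- Identity of `ĥ`: deleting a local maximum from a cyclic generalized arithmetic
sequence does not change the value of `ĥ`. Here `a : ℤ → ℝ` is the original cyclic
sequence (periodic of period `n`) and `b : ℤ → ℝ` is the cyclic sequence
(periodic of period `n - 1`) obtained by deleting the local maximum `a m`. -/
theorem hhat_identity (n : ℕ) (hn : 2 ≤ n) (a : ℤ → ℝ) (m : ℤ)
    (hm1 : 1 ≤ m) (hm2 : m ≤ (n : ℤ))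
    (hpos : ∀ i, 0 < a i) (hper : ∀ i, a (i + (n : ℤ)) = a i)
    (hgas : ∀ i, ∃ c : ℕ+, a (i - 1) + a (i + 1) = (c : ℝ) * a i)
    (hmax₁ : a (m - 1) < a m) (hmax₂ : a (m + 1) < a m)
    (b : ℤ → ℝ) (hbpos : ∀ i, 0 < b i) (hbper : ∀ i, b (i + ((n : ℤ) - 1)) = b i)
    (hb₁ : ∀ i, 1 ≤ i → i < m → b i = a i)
    (hb₂ : ∀ i, m ≤ i → i ≤ (n : ℤ) - 1 → b i = a (i + 1)) :
    hhatCyc (n - 1) b = hhatCyc n a := by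
  -- the local-maximum relation: a (m-1) + a (m+1) = a m
  obtain ⟨c, hcm⟩ := hgas m
  have hc : a (m - 1) + a (m + 1) = a m := by
    have hcR : ((c : ℕ) : ℝ) = (c : ℝ) := by norm_cast
    have hlt : ((c : ℕ) : ℝ) * a m < 2 * a m := by
      rw [hcR, ← hcm]; nlinarith [hmax₁, hmax₂]
    have h2 : ((c : ℕ) : ℝ) < 2 := by
      have := hpos m; nlinarith
    have h2' : (c : ℕ) < 2 := by exact_mod_cast h2
    have hc1 : (c : ℕ) = 1 := by have := c.pos; omega
    rw [hcm, ← hcR, hc1]; norm_num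
  rcases hn.lt_or_eq with h3 | h2
  · -- case 3 ≤ n
    have hN : (3 : ℤ) ≤ (n : ℤ) := by exact_mod_cast h3
    set N : ℤ := (n : ℤ) with hNdef
    set fa : ℤ → ℝ := fun i => (a (i - 1) + a (i + 1)) / a i - 3 with hfa
    set fb : ℤ → ℝ := fun i => (b (i - 1) + b (i + 1)) / b i - 3 with hfb
    have hfaper : ∀ i, fa (i + N) = fa i := by
      intro i; simp only [hfa]
      rw [show i + N - 1 = (i - 1) + N by ring, show i + N + 1 = (i + 1) + N by ring,
        hper, hper, hper]
    have hfbper : ∀ i, fb (i + (N - 1)) = fb i := by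
      intro i; simp only [hfb]
      rw [show i + (N - 1) - 1 = (i - 1) + (N - 1) by ring,
        show i + (N - 1) + 1 = (i + 1) + (N - 1) by ring, hbper, hbper, hbper]
    have hbA : ∀ i, m ≤ i → i ≤ m + N - 2 → b i = a (i + 1) := by
      intro i h1 h2
      rcases le_or_gt i (N - 1) with h | h
      · exact hb₂ i h1 h
      · have e1 : b (i - (N - 1) + (N - 1)) = b (i - (N - 1)) := hbper _
        rw [show i - (N - 1) + (N - 1) = i by ring] at e1
        have e2 : b (i - (N - 1)) = a (i - (N - 1)) := hb₁ _ (by omega) (by omega)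
        have e3 : a (i + 1 - N + N) = a (i + 1 - N) := hper _
        rw [show i + 1 - N + N = i + 1 by ring] at e3
        rw [e1, e2, show i - (N - 1) = i + 1 - N by ring, ← e3]
    have hbm1 : b (m - 1) = a (m - 1) := by
      have e1 : b (m - 1 + (N - 1)) = b (m - 1) := hbper _
      rw [show m - 1 + (N - 1) = m + N - 2 by ring] at e1
      have e2 := hbA (m + N - 2) (by omega) (by omega)
      rw [show m + N - 2 + 1 = m + N - 1 by ring] at e2
      have e3 : a (m - 1 + N) = a (m - 1) := hper _
      rw [show m - 1 + N = m + N - 1 by ring] at e3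
      rw [← e1, e2, e3]
    have hbtop : b (m + N - 1) = a (m + 1) := by
      have e1 : b (m + (N - 1)) = b m := hbper _
      rw [show m + (N - 1) = m + N - 1 by ring] at e1
      rw [e1, hbA m le_rfl (by omega)]
    have hbcast : ((n - 1 : ℕ) : ℤ) = N - 1 := by rw [hNdef]; omega
    have hb2 : hhatCyc (n - 1) b = ∑ i ∈ Finset.Icc (1 : ℤ) (N - 1), fb i := by
      rw [hhat_eq_sum (n - 1) b (by intro i; rw [hbcast]; exact hbper i), hbcast]
    have ha2 : hhatCyc n a = ∑ i ∈ Finset.Icc (1 : ℤ) N, fa i := hhat_eq_sum n a hper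
    have hwa := sum_window fa N hfaper (m - 1)
    rw [show m - 1 + 1 = m by ring, show m - 1 + N = m + N - 1 by ring] at hwa
    have hwb := sum_window fb (N - 1) hfbper (m - 1)
    rw [show m - 1 + 1 = m by ring, show m - 1 + (N - 1) = m + N - 2 by ring] at hwb
    have hSb : ∑ i ∈ Finset.Icc m (m + N - 2), fb i
        = fb m + ((∑ i ∈ Finset.Icc (m + 1) (m + N - 3), fb i) + fb (m + N - 2)) := by
      rw [sum_Icc_bot fb m (m + N - 2) (by omega),
        sum_Icc_top fb (m + 1) (m + N - 2) (by omega),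
        show m + N - 2 - 1 = m + N - 3 by ring]
    have hSa : ∑ i ∈ Finset.Icc m (m + N - 1), fa i
        = fa m + (fa (m + 1) + ((∑ i ∈ Finset.Icc (m + 2) (m + N - 2), fa i)
          + fa (m + N - 1))) := by
      rw [sum_Icc_bot fa m (m + N - 1) (by omega),
        sum_Icc_bot fa (m + 1) (m + N - 1) (by omega),
        show m + 1 + 1 = m + 2 by ring,
        sum_Icc_top fa (m + 2) (m + N - 1) (by omega),
        show m + N - 1 - 1 = m + N - 2 by ring]
    have hmid : ∑ i ∈ Finset.Icc (m + 2) (m + N - 2), fa i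
        = ∑ i ∈ Finset.Icc (m + 1) (m + N - 3), fb i := by
      have hsh := sum_Icc_shift fa (m + 1) (m + N - 3) 1
      rw [show m + 1 + 1 = m + 2 by ring, show m + N - 3 + 1 = m + N - 2 by ring] at hsh
      rw [hsh]
      apply Finset.sum_congr rfl
      intro i hi
      simp only [Finset.mem_Icc] at hi
      simp only [hfa, hfb]
      rw [show i + 1 - 1 = i by ring, show i + 1 + 1 = i + 2 by ring]
      rw [hbA (i - 1) (by omega) (by omega), hbA (i + 1) (by omega) (by omega),
        hbA i (by omega) (by omega)]
      rw [show i - 1 + 1 = i by ring, show i + 1 + 1 = i + 2 by ring]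
    have hend : fa m + fa (m + 1) + fa (m + N - 1) = fb m + fb (m + N - 2) := by
      simp only [hfa, hfb]
      rw [show m + 1 - 1 = m by ring, show m + 1 + 1 = m + 2 by ring,
        show m + N - 1 - 1 = m + N - 2 by ring, show m + N - 1 + 1 = m + N by ring,
        show m + N - 2 - 1 = m + N - 3 by ring, show m + N - 2 + 1 = m + N - 1 by ring]
      have q := hbA (m + N - 2) (by omega) (by omega)
      rw [show m + N - 2 + 1 = m + N - 1 by ring] at q
      rw [hbm1, hbtop, hbA (m + 1) (by omega) (by omega), hbA m le_rfl (by omega),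
        hbA (m + N - 3) (by omega) (by omega), q]
      rw [show m + 1 + 1 = m + 2 by ring, show m + N - 3 + 1 = m + N - 2 by ring]
      have p1 : a (m + N - 2) = a (m - 2) := by
        have := hper (m - 2); rw [show m - 2 + N = m + N - 2 by ring] at this; exact this
      have p2 : a (m + N - 1) = a (m - 1) := by
        have := hper (m - 1); rw [show m - 1 + N = m + N - 1 by ring] at this; exact this
      have p3 : a (m + N) = a m := hper m
      rw [p1, p2, p3]
      have h0 : a m = a (m - 1) + a (m + 1) := hc.symm
      rw [h0]
      have x1 := (hpos (m - 1)).ne'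
      have x2 := (hpos (m + 1)).ne'
      have x3 : a (m - 1) + a (m + 1) ≠ 0 := (add_pos (hpos (m - 1)) (hpos (m + 1))).ne'
      field_simp
      ring
    rw [hb2, ha2, ← hwa, ← hwb, hSa, hSb, hmid]
    linarith [hend]
  · -- case n = 2
    subst h2
    have hpa : ∀ i, a (i + 2) = a i := by
      intro i; have := hper i; norm_num at this; exact this
    have hpb : ∀ i, b (i + 1) = b i := by
      intro i; have := hbper i; norm_num at this; exact this
    have hb0 : ∀ i, b i = b 0 := by
      intro i
      induction i using Int.induction_on with
      | zero => rfl
      | succ k ih => rw [← ih]; exact hpb k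
      | pred k ih =>
        have h := hpb (-(k : ℤ) - 1)
        rw [show -(k : ℤ) - 1 + 1 = -(k : ℤ) by ring] at h
        rw [h] at ih
        exact ih
    have ha3 : a 3 = a 1 := by have := hpa 1; norm_num at this; exact this
    have ha4 : a 4 = a 2 := by have := hpa 2; norm_num at this; exact this
    have ha0 : a 0 = a 2 := by have := hpa 0; norm_num at this; exact this.symm
    have hm2' : m ≤ 2 := by exact_mod_cast hm2
    unfold hhatCyc
    rw [show ((2 - 1 : ℕ) : ℤ) = 1 by norm_num, show (((2 : ℕ)) : ℤ) = 2 by norm_num,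
      Finset.Icc_self, Finset.sum_singleton,
      show Finset.Icc (1 : ℤ) 2 = {1, 2} from by ext x; simp; omega,
      Finset.sum_insert (by norm_num), Finset.sum_singleton]
    norm_num
    rw [hb0 1, hb0 2, hb0 3, ha3, ha4, ha0]
    have xb := (hbpos 0).ne'
    have x1 := (hpos 1).ne'
    have x2 := (hpos 2).ne'
    interval_cases m
    · -- m = 1
      have h1 : a 1 = 2 * a 2 := by
        rw [show (1 : ℤ) - 1 = 0 by ring, show (1 : ℤ) + 1 = 2 by ring, ha0] at hc
        linarith
      rw [h1]
      field_simp
      ring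
    · -- m = 2
      have h1 : a 2 = 2 * a 1 := by
        rw [show (2 : ℤ) - 1 = 1 by ring, show (2 : ℤ) + 1 = 3 by ring, ha3] at hc
        linarith
      rw [h1]
      field_simp
      ring
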